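/- Let γ ∈ (0,1) and ε > 0. Let f₁ : [0,ε] → ℝ be continuously differentiable, f₂ : [0,ε] → ℝ continuous, and let w : (0,ε) → ℝ be twice continuously differentiable and satisfy −(y^{1−2γ} w′(y))′ = (y^{2−2γ} f₁(y))′ + y^{1−2γ} f₂(y) for all y ∈ (0,ε). Then there exist real constants a and b such that for all y ∈ (0,ε): w(y) = a + b·y^{2γ} − ∫₀^y σ f₁(σ) dσ − ∫₀^y σ^{2γ−1} ( ∫₀^σ τ^{1−2γ} f₂(τ) dτ ) dσ. -/

import Mathlib

open Real Set intervalIntegral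

noncomputable section

private lemma const_of_hasDerivAt_zero {s : Set ℝ} (hs : Convex ℝ s) (ho : IsOpen s)
    {f : ℝ → ℝ} (hf : ∀ x ∈ s, HasDerivAt f 0 x) {x y : ℝ} (hx : x ∈ s) (hy : y ∈ s) :
    f x = f y := by
  refine hs.is_const_of_fderivWithin_eq_zero
    (fun z hz => ((hf z hz).differentiableAt).differentiableWithinAt)
    (fun z hz => ?_) hx hy
  rw [fderivWithin_of_isOpen ho hz, (hf z hz).hasFDerivAt.fderiv]
  ext
  simp

/-- One-dimensional representation formula for solutions of the degenerate ODE
`-(y^(1-2γ) w')' = (y^(2-2γ) f₁)' + y^(1-2γ) f₂` on `(0,ε)`: every solution is of the form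
`w(y) = a + b y^(2γ) - ∫₀^y σ f₁(σ)dσ - ∫₀^y σ^(2γ-1) ∫₀^σ τ^(1-2γ) f₂(τ)dτ dσ`. -/
theorem degenerate_ode_representation (γ : ℝ) (hγ : γ ∈ Set.Ioo (0:ℝ) 1)
    (ε : ℝ) (hε : 0 < ε) (f₁ f₂ w : ℝ → ℝ)
    (hf₁ : ContDiffOn ℝ 1 f₁ (Icc 0 ε))
    (hf₂ : ContinuousOn f₂ (Icc 0 ε))
    (hw : ContDiffOn ℝ 2 w (Ioo 0 ε))
    (heq : ∀ y ∈ Ioo 0 ε,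
      -deriv (fun t : ℝ => t ^ (1 - 2*γ) * deriv w t) y
        = deriv (fun t : ℝ => t ^ (2 - 2*γ) * f₁ t) y + y ^ (1 - 2*γ) * f₂ y) :
    ∃ a b : ℝ, ∀ y ∈ Ioo 0 ε,
      w y = a + b * y ^ (2*γ)
        - (∫ σ in (0:ℝ)..y, σ * f₁ σ)
        - (∫ σ in (0:ℝ)..y, σ ^ (2*γ - 1) * ∫ τ in (0:ℝ)..σ, τ ^ (1 - 2*γ) * f₂ τ) := by
  obtain ⟨hγ0, hγ1⟩ := hγ
  have hcI : ε/2 ∈ Ioo (0:ℝ) ε := ⟨by positivity, by linarith⟩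
  -- the inner integrand and its primitive
  set g₂ : ℝ → ℝ := fun τ => τ ^ (1 - 2*γ) * f₂ τ with hg₂def
  have hg₂int : ∀ s ∈ Icc (0:ℝ) ε, IntervalIntegrable g₂ MeasureTheory.volume 0 s := by
    intro s hs
    refine (intervalIntegral.intervalIntegrable_rpow' (by linarith)).mul_continuousOn ?_
    refine hf₂.mono ?_
    rw [uIcc_of_le hs.1]
    exact Icc_subset_Icc le_rfl hs.2
  set H : ℝ → ℝ := fun s => ∫ τ in (0:ℝ)..s, g₂ τ with hHdef
  have hHcont : ContinuousOn H (Icc 0 ε) := by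
    have h0 : (0:ℝ) ∈ Set.uIcc (0:ℝ) ε := left_mem_uIcc
    have := intervalIntegral.continuousOn_primitive_interval'
      (hg₂int ε (right_mem_Icc.2 hε.le)) h0
    rwa [uIcc_of_le hε.le] at this
  have hg₂contOn : ContinuousOn g₂ (Ioo 0 ε) := by
    apply ContinuousOn.mul
    · intro x hx
      exact (Real.continuousAt_rpow_const x _ (Or.inl (ne_of_gt hx.1))).continuousWithinAt
    · exact hf₂.mono Ioo_subset_Icc_self
  have hHderiv : ∀ y ∈ Ioo (0:ℝ) ε, HasDerivAt H (g₂ y) y := fun y hy =>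
    intervalIntegral.integral_hasDerivAt_right (hg₂int y (Ioo_subset_Icc_self hy))
      (hg₂contOn.stronglyMeasurableAtFilter isOpen_Ioo y hy)
      (hg₂contOn.continuousAt (isOpen_Ioo.mem_nhds hy))
  -- differentiability basics
  have hwd : ∀ y ∈ Ioo (0:ℝ) ε, DifferentiableAt ℝ w y := fun y hy =>
    ((hw.differentiableOn (by norm_num)) y hy).differentiableAt (isOpen_Ioo.mem_nhds hy)
  have hw' : ContDiffOn ℝ 1 (deriv w) (Ioo 0 ε) :=
    hw.deriv_of_isOpen isOpen_Ioo (by norm_num)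
  have hw'd : ∀ y ∈ Ioo (0:ℝ) ε, DifferentiableAt ℝ (deriv w) y := fun y hy =>
    ((hw'.differentiableOn (by norm_num)) y hy).differentiableAt (isOpen_Ioo.mem_nhds hy)
  have hf₁d : ∀ y ∈ Ioo (0:ℝ) ε, DifferentiableAt ℝ f₁ y := fun y hy =>
    ((hf₁.differentiableOn (by norm_num)) y (Ioo_subset_Icc_self hy)).differentiableAt (Icc_mem_nhds hy.1 hy.2)
  have hrpow : ∀ (p : ℝ), ∀ y ∈ Ioo (0:ℝ) ε,
      HasDerivAt (fun t : ℝ => t ^ p) (p * y ^ (p-1)) y := fun p y hy =>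
    Real.hasDerivAt_rpow_const (Or.inl (ne_of_gt hy.1))
  have hFd : ∀ y ∈ Ioo (0:ℝ) ε,
      DifferentiableAt ℝ (fun t : ℝ => t ^ (1 - 2*γ) * deriv w t) y := fun y hy =>
    ((hrpow _ y hy).differentiableAt).mul (hw'd y hy)
  have hGd : ∀ y ∈ Ioo (0:ℝ) ε,
      DifferentiableAt ℝ (fun t : ℝ => t ^ (2 - 2*γ) * f₁ t) y := fun y hy =>
    ((hrpow _ y hy).differentiableAt).mul (hf₁d y hy)
  -- first integration: Ψ is constant
  set Ψ : ℝ → ℝ := fun t => t ^ (1 - 2*γ) * deriv w t + t ^ (2 - 2*γ) * f₁ t + H t with hΨdef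
  have hΨ0 : ∀ y ∈ Ioo (0:ℝ) ε, HasDerivAt Ψ 0 y := by
    intro y hy
    have h1 := (((hFd y hy).hasDerivAt.add (hGd y hy).hasDerivAt).add (hHderiv y hy))
    have h2 := heq y hy
    have h3 : deriv (fun t : ℝ => t ^ (1 - 2*γ) * deriv w t) y
        + deriv (fun t : ℝ => t ^ (2 - 2*γ) * f₁ t) y + g₂ y = 0 := by
      simp only [hg₂def]
      linarith
    rw [h3] at h1
    exact h1
  set C₁ : ℝ := Ψ (ε/2) with hC₁def
  have hΨconst : ∀ y ∈ Ioo (0:ℝ) ε, Ψ y = C₁ := fun y hy =>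
    const_of_hasDerivAt_zero (convex_Ioo 0 ε) isOpen_Ioo hΨ0 hy hcI
  -- solve for w'
  have hw'eq : ∀ y ∈ Ioo (0:ℝ) ε,
      deriv w y = C₁ * y ^ (2*γ-1) - y * f₁ y - y ^ (2*γ-1) * H y := by
    intro y hy
    have hy0 : (0:ℝ) < y := hy.1
    have e1 : y ^ (2*γ-1) * y ^ (1 - 2*γ) = 1 := by
      rw [← Real.rpow_add hy0]
      norm_num
    have e2 : y ^ (2*γ-1) * y ^ (2 - 2*γ) = y := by
      rw [← Real.rpow_add hy0]
      norm_num
    have h := hΨconst y hy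
    simp only [hΨdef] at h
    have h3 : y ^ (1 - 2*γ) * deriv w y = C₁ - y ^ (2 - 2*γ) * f₁ y - H y := by linarith
    calc deriv w y = y ^ (2*γ-1) * (y ^ (1 - 2*γ) * deriv w y) := by
          rw [← mul_assoc, e1, one_mul]
      _ = y ^ (2*γ-1) * (C₁ - y ^ (2 - 2*γ) * f₁ y - H y) := by rw [h3]
      _ = C₁ * y ^ (2*γ-1) - y * f₁ y - y ^ (2*γ-1) * H y := by
          rw [mul_sub, mul_sub, ← mul_assoc, e2]; ring
  -- integrability of the outer integrands
  have hrint : ∀ s ∈ Icc (0:ℝ) ε,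
      IntervalIntegrable (fun σ : ℝ => σ * f₁ σ) MeasureTheory.volume 0 s := by
    intro s hs
    apply ContinuousOn.intervalIntegrable
    exact continuousOn_id.mul (hf₁.continuousOn.mono
      (by rw [uIcc_of_le hs.1]; exact Icc_subset_Icc le_rfl hs.2))
  have hqint : ∀ s ∈ Icc (0:ℝ) ε,
      IntervalIntegrable (fun σ : ℝ => σ ^ (2*γ-1) * H σ) MeasureTheory.volume 0 s := by
    intro s hs
    refine (intervalIntegral.intervalIntegrable_rpow' (by linarith)).mul_continuousOn ?_
    exact hHcont.mono (by rw [uIcc_of_le hs.1]; exact Icc_subset_Icc le_rfl hs.2)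
  have hrcontOn : ContinuousOn (fun σ : ℝ => σ * f₁ σ) (Ioo 0 ε) :=
    continuousOn_id.mul (hf₁.continuousOn.mono Ioo_subset_Icc_self)
  have hqcontOn : ContinuousOn (fun σ : ℝ => σ ^ (2*γ-1) * H σ) (Ioo 0 ε) := by
    apply ContinuousOn.mul
    · intro x hx
      exact (Real.continuousAt_rpow_const x _ (Or.inl (ne_of_gt hx.1))).continuousWithinAt
    · exact hHcont.mono Ioo_subset_Icc_self
  -- second integration: Φ is constant
  set b : ℝ := C₁ / (2*γ) with hbdef
  set Φ : ℝ → ℝ := fun t => w t + (∫ σ in (0:ℝ)..t, σ * f₁ σ)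
      + (∫ σ in (0:ℝ)..t, σ ^ (2*γ-1) * H σ) - b * t ^ (2*γ) with hΦdef
  have hΦ0 : ∀ y ∈ Ioo (0:ℝ) ε, HasDerivAt Φ 0 y := by
    intro y hy
    have d1 : HasDerivAt w (deriv w y) y := (hwd y hy).hasDerivAt
    have d2 : HasDerivAt (fun t : ℝ => ∫ σ in (0:ℝ)..t, σ * f₁ σ) (y * f₁ y) y :=
      intervalIntegral.integral_hasDerivAt_right (hrint y (Ioo_subset_Icc_self hy))
        (hrcontOn.stronglyMeasurableAtFilter isOpen_Ioo y hy)
        (hrcontOn.continuousAt (isOpen_Ioo.mem_nhds hy))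
    have d3 : HasDerivAt (fun t : ℝ => ∫ σ in (0:ℝ)..t, σ ^ (2*γ-1) * H σ)
        (y ^ (2*γ-1) * H y) y :=
      intervalIntegral.integral_hasDerivAt_right (hqint y (Ioo_subset_Icc_self hy))
        (hqcontOn.stronglyMeasurableAtFilter isOpen_Ioo y hy)
        (hqcontOn.continuousAt (isOpen_Ioo.mem_nhds hy))
    have d4 : HasDerivAt (fun t : ℝ => b * t ^ (2*γ)) (b * (2*γ * y ^ (2*γ-1))) y :=
      (hrpow (2*γ) y hy).const_mul b
    have hsum := ((d1.add d2).add d3).sub d4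
    have hval : deriv w y + y * f₁ y + y ^ (2*γ-1) * H y - b * (2*γ * y ^ (2*γ-1)) = 0 := by
      have hb : b * (2*γ * y ^ (2*γ-1)) = C₁ * y ^ (2*γ-1) := by
        rw [hbdef]
        field_simp
      rw [hb, hw'eq y hy]
      ring
    rw [hval] at hsum
    exact hsum
  have hΦconst : ∀ y ∈ Ioo (0:ℝ) ε, Φ y = Φ (ε/2) := fun y hy =>
    const_of_hasDerivAt_zero (convex_Ioo 0 ε) isOpen_Ioo hΦ0 hy hcI
  refine ⟨Φ (ε/2), b, fun y hy => ?_⟩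
  have h := hΦconst y hy
  simp only [hΦdef] at h
  show w y = Φ (ε/2) + b * y ^ (2*γ)
      - (∫ σ in (0:ℝ)..y, σ * f₁ σ)
      - (∫ σ in (0:ℝ)..y, σ ^ (2*γ-1) * H σ)
  linarith
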